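/- arXiv:2203.04054 — 3 statements merged into one kernel-verified Lean document; each statement's English description precedes it below -/
import Mathlib

section
/- Let T^n be the flat torus with metric ϱ as above and p ≥ 1. Two measures μ, ν ∈ W_p(T^n) satisfy W_p(μ,ν) = √n/2 (the diameter) if and only if μ = δ_x and ν = δ_y for some pair of antipodal points x, y (i.e. y = x + (1/2,...,1/2) mod 1). -/
open MeasureTheory Filter

/-- The `p`-Wasserstein distance with cost function `c` (the distance of the
underlying space): infimum over couplings of `∫ c(x,y)^p dπ`, to the power `1/p`. -/
noncomputable def wassersteinDist {X : Type*} [MeasurableSpace X]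
    (c : X → X → ℝ) (p : ℝ) (μ ν : Measure X) : ℝ :=
  sInf {r : ℝ | ∃ π : Measure (X × X), IsProbabilityMeasure π ∧
      π.map Prod.fst = μ ∧ π.map Prod.snd = ν ∧
      r = ∫ q, c q.1 q.2 ^ p ∂π} ^ (1 / p)

/-- The flat `n`-dimensional torus `ℝ^n/ℤ^n`. -/
abbrev Torus (n : ℕ) := Fin n → AddCircle (1 : ℝ)

/-- The flat (ℓ²) metric on the torus: each coordinate distance is the
distance `|(x_k - y_k) mod 1|` on `ℝ/ℤ`. -/
noncomputable def torusDist {n : ℕ} (x y : Torus n) : ℝ :=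
  Real.sqrt (∑ k, dist (x k) (y k) ^ 2)

/-- The antipodal point of `x` in the flat torus: `x + (1/2, …, 1/2)`. -/
noncomputable def torusAntipode {n : ℕ} (x : Torus n) : Torus n :=
  fun k => x k + ((1 / 2 : ℝ) : AddCircle (1 : ℝ))

/- ### Auxiliary lemmas on `AddCircle 1` -/

lemma addCircle_norm_le_half (z : AddCircle (1:ℝ)) : ‖z‖ ≤ 1/2 := by
  induction z using QuotientAddGroup.induction_on with
  | H x =>
    rw [AddCircle.norm_eq]
    simpa using abs_sub_round x

lemma addCircle_norm_half : ‖((1/2 : ℝ) : AddCircle (1:ℝ))‖ = 1/2 := by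
  rw [AddCircle.norm_eq]
  rw [show round ((1:ℝ)⁻¹ * (1/2)) = 1 by rw [round_eq]; norm_num]
  norm_num

lemma addCircle_norm_eq_half_iff (z : AddCircle (1:ℝ)) :
    ‖z‖ = 1/2 ↔ z = ((1/2 : ℝ) : AddCircle (1:ℝ)) := by
  constructor
  · induction z using QuotientAddGroup.induction_on with
    | H x =>
      rw [AddCircle.norm_eq]
      simp only [inv_one, one_mul, mul_one]
      intro h
      have h1 : (round x : ℝ) ≤ x + 1/2 := by
        rw [round_eq]; exact Int.floor_le _
      have h2 : x + 1/2 < (round x : ℝ) + 1 := by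
        rw [round_eq]; exact Int.lt_floor_add_one _
      have hx : x - round x = -(1/2) := by
        rcases abs_eq (by norm_num : (0:ℝ) ≤ 1/2) |>.mp h with h' | h'
        · linarith
        · exact h'
      have : ((x : ℝ) : AddCircle (1:ℝ)) - ((1/2 : ℝ) : AddCircle (1:ℝ)) = 0 := by
        rw [← AddCircle.coe_sub, AddCircle.coe_eq_zero_iff]
        exact ⟨round x - 1, by rw [zsmul_eq_mul]; push_cast; linarith⟩
      exact sub_eq_zero.mp this
  · rintro rfl; exact addCircle_norm_half

lemma addCircle_neg_half :
    -(((1/2 : ℝ) : AddCircle (1:ℝ))) = ((1/2 : ℝ) : AddCircle (1:ℝ)) := by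
  rw [← AddCircle.coe_neg, ← sub_eq_zero, ← AddCircle.coe_sub, AddCircle.coe_eq_zero_iff]
  exact ⟨-1, by rw [zsmul_eq_mul]; push_cast; ring⟩

lemma addCircle_dist_le_half (a b : AddCircle (1:ℝ)) : dist a b ≤ 1/2 := by
  rw [dist_eq_norm]; exact addCircle_norm_le_half _

lemma addCircle_dist_eq_half_iff (a b : AddCircle (1:ℝ)) :
    dist a b = 1/2 ↔ b = a + ((1/2 : ℝ) : AddCircle (1:ℝ)) := by
  rw [dist_eq_norm, addCircle_norm_eq_half_iff]
  constructor
  · intro h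
    have : b = a - ((1/2 : ℝ) : AddCircle (1:ℝ)) := by
      rw [eq_sub_iff_add_eq, ← eq_sub_iff_add_eq']
      exact h.symm
    rw [this, sub_eq_add_neg, addCircle_neg_half]
  · intro h
    rw [h, sub_add_cancel_left, addCircle_neg_half]

/- ### Auxiliary lemmas on the torus metric -/

lemma sqrt_n_div4 (n : ℕ) : Real.sqrt ((n:ℝ)/4) = Real.sqrt n / 2 := by
  rw [Real.sqrt_div (Nat.cast_nonneg n),
    show (4:ℝ) = 2^2 by norm_num, Real.sqrt_sq (by norm_num : (0:ℝ) ≤ 2)]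

lemma torusDist_nonneg {n : ℕ} (x y : Torus n) : 0 ≤ torusDist x y :=
  Real.sqrt_nonneg _

lemma torusDist_le {n : ℕ} (x y : Torus n) : torusDist x y ≤ Real.sqrt n / 2 := by
  have h1 : ∑ k, dist (x k) (y k) ^ 2 ≤ (n:ℝ)/4 := by
    have h : ∑ k, dist (x k) (y k) ^ 2 ≤ ∑ _k : Fin n, (1/2:ℝ) ^ 2 := by
      apply Finset.sum_le_sum; intro k _
      have h := addCircle_dist_le_half (x k) (y k)
      have h0 : (0:ℝ) ≤ dist (x k) (y k) := dist_nonneg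
      nlinarith
    refine h.trans_eq ?_
    rw [Finset.sum_const, Finset.card_fin, nsmul_eq_mul]; ring
  calc torusDist x y ≤ Real.sqrt ((n:ℝ)/4) := Real.sqrt_le_sqrt h1
    _ = _ := sqrt_n_div4 n

lemma torusDist_antipode {n : ℕ} (x : Torus n) :
    torusDist x (torusAntipode x) = Real.sqrt n / 2 := by
  unfold torusDist
  have h : ∀ k : Fin n, dist (x k) (torusAntipode x k) = 1/2 := fun k =>
    (addCircle_dist_eq_half_iff _ _).mpr rfl
  rw [Finset.sum_congr rfl fun k _ => by rw [h k]]
  rw [Finset.sum_const]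
  rw [show (Finset.univ.card : ℕ) • ((1:ℝ)/2)^2 = (n:ℝ)/4 by
    rw [Finset.card_fin, nsmul_eq_mul]; ring]
  exact sqrt_n_div4 n

lemma torusDist_eq_iff {n : ℕ} (x y : Torus n) :
    torusDist x y = Real.sqrt n / 2 ↔ y = torusAntipode x := by
  constructor
  · intro h
    have hsum : ∑ k, dist (x k) (y k) ^ 2 = (n:ℝ)/4 := by
      have h4 : (0:ℝ) ≤ (n:ℝ)/4 := by positivity
      have hs : (0:ℝ) ≤ ∑ k, dist (x k) (y k) ^ 2 :=
        Finset.sum_nonneg fun k _ => sq_nonneg _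
      have h' : Real.sqrt (∑ k, dist (x k) (y k) ^ 2) = Real.sqrt ((n:ℝ)/4) := by
        rw [sqrt_n_div4]; exact h
      exact (Real.sqrt_inj hs h4).mp h'
    have key : ∀ k : Fin n, dist (x k) (y k) ^ 2 = (1/2:ℝ)^2 := by
      have hz : ∑ k : Fin n, ((1/2:ℝ)^2 - dist (x k) (y k) ^ 2) = 0 := by
        rw [Finset.sum_sub_distrib, hsum, Finset.sum_const, Finset.card_fin, nsmul_eq_mul]
        ring
      intro k
      have := (Finset.sum_eq_zero_iff_of_nonneg (fun k _ => by
        have h := addCircle_dist_le_half (x k) (y k)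
        have h0 : (0:ℝ) ≤ dist (x k) (y k) := dist_nonneg
        nlinarith)).mp hz k (Finset.mem_univ k)
      linarith
    funext k
    have h0 : (0:ℝ) ≤ dist (x k) (y k) := dist_nonneg
    have hh : dist (x k) (y k) = 1/2 := by nlinarith [key k]
    exact (addCircle_dist_eq_half_iff _ _).mp hh
  · rintro rfl; exact torusDist_antipode x

lemma continuous_torusDist {n : ℕ} :
    Continuous (fun q : Torus n × Torus n => torusDist q.1 q.2) := by
  unfold torusDist
  apply Real.continuous_sqrt.comp
  apply continuous_finset_sum
  intro k _
  exact (((continuous_apply k).comp continuous_fst).dist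
    ((continuous_apply k).comp continuous_snd)).pow 2

lemma continuous_torusAntipode {n : ℕ} : Continuous (torusAntipode (n := n)) :=
  continuous_pi fun k => (continuous_apply k).add continuous_const

lemma torusAntipode_injective {n : ℕ} : Function.Injective (torusAntipode (n := n)) := by
  intro a b hab
  funext k
  have := congrFun hab k
  exact add_right_cancel this

/- ### Dirac helper -/

lemma eq_dirac_of_ae_eq {α : Type*} [MeasurableSpace α] (μ : Measure α)
    [IsProbabilityMeasure μ] {a : α} (h : ∀ᵐ x ∂μ, x = a) : μ = Measure.dirac a := by
  have hnull : μ {x | ¬ x = a} = 0 := ae_iff.mp h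
  ext s hs
  rw [Measure.dirac_apply' a hs]
  by_cases ha : a ∈ s
  · rw [Set.indicator_of_mem ha]
    have hc : μ sᶜ = 0 := by
      refine measure_mono_null ?_ hnull
      intro x hx hxa
      subst hxa; exact hx ha
    have := measure_add_measure_compl hs (μ := μ)
    rw [hc, add_zero] at this
    simpa using this
  · rw [Set.indicator_of_notMem ha]
    refine measure_mono_null ?_ hnull
    intro x hx hxa
    subst hxa; exact ha hx

/-- Two measures in `W_p(𝕋ⁿ)` are at the maximal distance `√n / 2` if and only
if they are Dirac measures concentrated on antipodal points. -/
theorem wasserstein_torus_dist_eq_diam_iff (n : ℕ) {p : ℝ} (hp : 1 ≤ p)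
    (μ ν : Measure (Torus n)) (hμ : IsProbabilityMeasure μ) (hν : IsProbabilityMeasure ν) :
    wassersteinDist torusDist p μ ν = Real.sqrt n / 2 ↔
      ∃ x : Torus n, μ = Measure.dirac x ∧ ν = Measure.dirac (torusAntipode x) := by
  have hp0 : (0:ℝ) < p := lt_of_lt_of_le one_pos hp
  have hpne : p ≠ 0 := ne_of_gt hp0
  set M : ℝ := Real.sqrt n / 2 with hMdef
  have hM : 0 ≤ M := by positivity
  have hMp : (M ^ p) ^ (1/p) = M := by
    rw [← Real.rpow_mul hM, mul_one_div, div_self hpne, Real.rpow_one]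
  set f : Torus n × Torus n → ℝ := fun q => torusDist q.1 q.2 ^ p with hfdef
  have hfc : Continuous f :=
    continuous_torusDist.rpow_const (fun q => Or.inr hp0.le)
  have hf0 : ∀ q, 0 ≤ f q := fun q => Real.rpow_nonneg (torusDist_nonneg _ _) p
  have hfle : ∀ q, f q ≤ M ^ p := fun q =>
    Real.rpow_le_rpow (torusDist_nonneg _ _) (torusDist_le _ _) hp0.le
  set S := {r : ℝ | ∃ π : Measure (Torus n × Torus n), IsProbabilityMeasure π ∧
      π.map Prod.fst = μ ∧ π.map Prod.snd = ν ∧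
      r = ∫ q, torusDist q.1 q.2 ^ p ∂π} with hSdef
  have hW : wassersteinDist torusDist p μ ν = sInf S ^ (1/p) := rfl
  have hint : ∀ (π : Measure (Torus n × Torus n)), IsProbabilityMeasure π →
      Integrable f π := by
    intro π hπ
    refine Integrable.mono' (integrable_const (M ^ p)) hfc.aestronglyMeasurable ?_
    filter_upwards with q
    rw [Real.norm_of_nonneg (hf0 q)]; exact hfle q
  have hSbound : ∀ r ∈ S, 0 ≤ r ∧ r ≤ M ^ p := by
    rintro r ⟨π, hπ, -, -, rfl⟩
    refine ⟨integral_nonneg hf0, ?_⟩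
    calc ∫ q, f q ∂π ≤ ∫ _q, M ^ p ∂π :=
          integral_mono (hint π hπ) (integrable_const _) hfle
      _ = M ^ p := by simp [hπ.measure_univ]
  have hSbdd : BddBelow S := ⟨0, fun r hr => (hSbound r hr).1⟩
  rw [hW]
  constructor
  · -- forward direction
    intro h
    have hπ₀ : IsProbabilityMeasure (μ.prod ν) := by infer_instance
    have hr₀mem : (∫ q, f q ∂(μ.prod ν)) ∈ S :=
      ⟨μ.prod ν, hπ₀, Measure.fst_prod, Measure.snd_prod, rfl⟩
    have hSne : S.Nonempty := ⟨_, hr₀mem⟩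
    have h0 : 0 ≤ sInf S := le_csInf hSne fun r hr => (hSbound r hr).1
    have hSM : sInf S = M ^ p :=
      Real.rpow_left_injOn (one_div_ne_zero hpne) h0 (Real.rpow_nonneg hM p)
        (h.trans hMp.symm)
    have hr₀ : (∫ q, f q ∂(μ.prod ν)) = M ^ p :=
      le_antisymm (hSbound _ hr₀mem).2 (hSM ▸ csInf_le hSbdd hr₀mem)
    -- a.e. equality of the cost with its maximum
    have hae : ∀ᵐ q ∂(μ.prod ν), q.2 = torusAntipode q.1 := by
      have hint0 := hint _ hπ₀
      have hzero : ∫ q, (M ^ p - f q) ∂(μ.prod ν) = 0 := by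
        rw [integral_sub (integrable_const _) hint0, hr₀, integral_const]
        simp [hπ₀.measure_univ]
      have haez := (integral_eq_zero_iff_of_nonneg
        (fun q => sub_nonneg.mpr (hfle q))
        ((integrable_const _).sub hint0)).mp hzero
      filter_upwards [haez] with q hq
      have hq' : M ^ p - f q = 0 := hq
      have hfq : f q = M ^ p := by linarith
      have hd : torusDist q.1 q.2 = M :=
        Real.rpow_left_injOn hpne (torusDist_nonneg _ _) hM hfq
      exact (torusDist_eq_iff _ _).mp hd
    set A : Set (Torus n × Torus n) := {q | q.2 = torusAntipode q.1} with hAdef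
    have hA : MeasurableSet A :=
      measurableSet_eq_fun measurable_snd
        (continuous_torusAntipode.measurable.comp measurable_fst)
    have hA1 : (μ.prod ν) A = 1 := by
      have hcompl : (μ.prod ν) Aᶜ = 0 := ae_iff.mp hae
      have := measure_add_measure_compl hA (μ := μ.prod ν)
      rw [hcompl, add_zero] at this
      simpa using this
    have hpre : ∀ x : Torus n, Prod.mk x ⁻¹' A = {torusAntipode x} := by
      intro x; ext y; simp [hAdef, Set.mem_singleton_iff, eq_comm]
    have hFmeas : Measurable (fun x => ν {torusAntipode x}) := by
      have := measurable_measure_prodMk_left (ν := ν) hA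
      simpa [hpre] using this
    have hFub : ∫⁻ x, ν {torusAntipode x} ∂μ = 1 := by
      have hthis := Measure.prod_apply (μ := μ) (ν := ν) hA
      rw [hA1] at hthis
      calc ∫⁻ x, ν {torusAntipode x} ∂μ = ∫⁻ x, ν (Prod.mk x ⁻¹' A) ∂μ :=
            lintegral_congr fun x => by rw [hpre x]
        _ = 1 := hthis.symm
    have hF1 : ∀ᵐ x ∂μ, ν {torusAntipode x} = 1 := by
      have hle1 : (fun x => ν {torusAntipode x}) ≤ᵐ[μ] fun _ => 1 :=
        ae_of_all _ fun x => prob_le_one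
      have hsub : ∫⁻ x, (1 - ν {torusAntipode x}) ∂μ = 0 := by
        rw [lintegral_sub hFmeas (by rw [hFub]; exact ENNReal.one_ne_top) hle1,
          hFub, lintegral_one, hμ.measure_univ, tsub_self]
      have haez := (lintegral_eq_zero_iff (measurable_const.sub hFmeas)).mp hsub
      filter_upwards [haez] with x hx
      have hx' : 1 - ν {torusAntipode x} = 0 := hx
      exact le_antisymm prob_le_one (by rwa [tsub_eq_zero_iff_le] at hx')
    have hne : (ae μ).NeBot := ae_neBot.mpr hμ.ne_zero
    obtain ⟨x₀, hx₀⟩ := hF1.exists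
    have huniq : ∀ᵐ x ∂μ, x = x₀ := by
      filter_upwards [hF1] with x hx
      by_contra hne'
      have hne2 : torusAntipode x ≠ torusAntipode x₀ :=
        fun hc => hne' (torusAntipode_injective hc)
      have hdisj : Disjoint ({torusAntipode x} : Set (Torus n)) {torusAntipode x₀} := by
        simpa [Set.disjoint_singleton] using hne2
      have hun := measure_union hdisj (measurableSet_singleton (torusAntipode x₀))
        (μ := ν)
      have hle := measure_mono
        (Set.subset_univ ({torusAntipode x} ∪ {torusAntipode x₀} : Set (Torus n)))
        (μ := ν)
      rw [hun, hx, hx₀, hν.measure_univ] at hle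
      norm_num at hle
    refine ⟨x₀, eq_dirac_of_ae_eq μ huniq, ?_⟩
    have hνae : ∀ᵐ y ∂ν, y = torusAntipode x₀ := by
      rw [ae_iff]
      have hset : {y : Torus n | ¬ y = torusAntipode x₀}
          = ({torusAntipode x₀} : Set (Torus n))ᶜ := by
        ext y; simp
      rw [hset]
      have := measure_compl (measurableSet_singleton (torusAntipode x₀))
        (μ := ν) (by simp)
      rw [this, hx₀, hν.measure_univ, tsub_self]
    exact eq_dirac_of_ae_eq ν hνae
  · -- backward direction
    rintro ⟨x, rfl, rfl⟩
    have hfx : f (x, torusAntipode x) = M ^ p := by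
      simp only [hfdef]
      rw [show torusDist (x, torusAntipode x).1 (x, torusAntipode x).2 = M from
        torusDist_antipode x]
    have hmem : M ^ p ∈ S := by
      refine ⟨Measure.dirac (x, torusAntipode x), inferInstance, ?_, ?_, ?_⟩
      · rw [Measure.map_dirac' measurable_fst]
      · rw [Measure.map_dirac' measurable_snd]
      · rw [integral_dirac' _ _ hfc.stronglyMeasurable]; exact hfx.symm
    have hall : ∀ r ∈ S, r = M ^ p := by
      rintro r ⟨π, hπ, hfst, hsnd, rfl⟩
      have h1 : π (Prod.fst ⁻¹' ({x}ᶜ : Set (Torus n))) = 0 := by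
        rw [← Measure.map_apply measurable_fst (measurableSet_singleton x).compl, hfst]
        simp [Measure.dirac_apply' _ (measurableSet_singleton x).compl]
      have h2 : π (Prod.snd ⁻¹' ({torusAntipode x}ᶜ : Set (Torus n))) = 0 := by
        rw [← Measure.map_apply measurable_snd
          (measurableSet_singleton (torusAntipode x)).compl, hsnd]
        simp [Measure.dirac_apply' _ (measurableSet_singleton (torusAntipode x)).compl]
      have hcup : π ((Prod.fst ⁻¹' ({x}ᶜ : Set (Torus n)))
          ∪ (Prod.snd ⁻¹' ({torusAntipode x}ᶜ : Set (Torus n)))) = 0 :=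
        le_antisymm ((measure_union_le _ _).trans (by rw [h1, h2, add_zero])) (zero_le)
      have hae : ∀ᵐ q ∂π, q = (x, torusAntipode x) := by
        rw [ae_iff]
        refine measure_mono_null ?_ hcup
        intro q hq
        by_cases h1' : q.1 = x
        · right
          intro h2'
          exact hq (Prod.ext h1' h2')
        · left; exact h1'
      have : ∫ q, f q ∂π = ∫ _q, M ^ p ∂π := by
        apply integral_congr_ae
        filter_upwards [hae] with q hq
        rw [hq]; exact hfx
      rw [this, integral_const]
      simp [hπ.measure_univ]
    have hSinf : sInf S = M ^ p :=
      le_antisymm (csInf_le hSbdd hmem) (le_csInf ⟨_, hmem⟩ fun r hr => (hall r hr).ge)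
    rw [hSinf, hMp]
end

section
/- Let μ, ν be Borel probability measures on the one-dimensional torus T = R/Z. If the Wasserstein potentials coincide, i.e. ∫_T ϱ(x,y)^2 dμ(y) = ∫_T ϱ(x,y)^2 dν(y) for every x ∈ T (where ϱ(x,y) = |(x−y) mod 1| with representative in [-1/2,1/2)), then μ = ν. -/
open MeasureTheory Complex Set AddCircle
open scoped Real NNReal

noncomputable section

instance WassAux.factOneLtZero : Fact ((0:ℝ) < 1) := ⟨one_pos⟩

namespace WassAux

abbrev 𝕋 := AddCircle (1 : ℝ)

/-- The squared distance to `0` on the circle, as a `ℂ`-valued function. -/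
def Cfun : 𝕋 → ℂ := fun z => ((‖z‖ ^ 2 : ℝ) : ℂ)

lemma continuous_Cfun : Continuous Cfun :=
  continuous_ofReal.comp ((continuous_norm).pow 2)

lemma hab : (-(2⁻¹:ℝ)) < -(2⁻¹:ℝ) + 1 := by norm_num

lemma Cfun_eq : Cfun = AddCircle.liftIoc 1 (-(2⁻¹:ℝ)) (fun x : ℝ => (x:ℂ)^2) := by
  funext z
  obtain ⟨x, hx, rfl⟩ : ∃ x ∈ Ioc (-(2⁻¹:ℝ)) (-(2⁻¹:ℝ) + 1), (x : 𝕋) = z := by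
    rcases (AddCircle.equivIoc 1 (-(2⁻¹:ℝ))).symm.surjective z with ⟨⟨x, hx⟩, hz⟩
    exact ⟨x, hx, by simpa [AddCircle.equivIoc] using hz⟩
  rw [AddCircle.liftIoc_coe_apply hx]
  have hx2 : |x| ≤ |(1:ℝ)| / 2 := by
    rw [abs_one]
    rw [mem_Ioc] at hx
    rw [abs_le]; constructor <;> [linarith [hx.1]; linarith [hx.2]]
  have : ‖(x : 𝕋)‖ = |x| := (AddCircle.norm_coe_eq_abs_iff (p := 1) one_ne_zero).mpr hx2
  simp [Cfun, this, _root_.sq_abs]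

lemma fourier_ne_zero {T : ℝ} [Fact (0 < T)] (n : ℤ) (x : AddCircle T) :
    fourier n x ≠ 0 := by
  simp only [fourier_apply]
  exact Circle.coe_ne_zero _

lemma twopin_ne {n : ℤ} (hn : n ≠ 0) : (-2 * ↑π * I * (n:ℂ)) ≠ 0 := by
  simp [Real.pi_ne_zero, I_ne_zero, hn]

lemma K0 {n : ℤ} (hn : n ≠ 0) : fourierCoeffOn hab (fun _ : ℝ => (1:ℂ)) n = 0 := by
  rw [fourierCoeffOn_of_hasDerivAt hab hn (f' := fun _ => (0:ℂ))
    (fun x _ => hasDerivAt_const x 1) intervalIntegrable_const]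
  have : fourierCoeffOn hab (fun _ : ℝ => (0:ℂ)) n = 0 := by
    simp [fourierCoeffOn_eq_integral]
  simp [this]

lemma K1 {n : ℤ} (hn : n ≠ 0) :
    fourierCoeffOn hab (fun x : ℝ => (x:ℂ)) n =
      (1 / (-2 * ↑π * I * n)) * fourier (-n) (((-(2⁻¹:ℝ)) : ℝ) : 𝕋) := by
  have hder : ∀ x ∈ uIcc (-(2⁻¹:ℝ)) (-(2⁻¹:ℝ) + 1),
      HasDerivAt (fun y : ℝ => (y:ℂ)) ((fun _ : ℝ => (1:ℂ)) x) x := by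
    intro x _
    simpa using (hasDerivAt_id x).ofReal_comp
  rw [fourierCoeffOn_of_hasDerivAt hab hn hder intervalIntegrable_const,
    show (-(2⁻¹:ℝ) + 1 - -(2⁻¹:ℝ)) = 1 by norm_num, K0 hn]
  have h1 : ((-(2⁻¹:ℝ) + 1 : ℝ) : ℂ) - ((-(2⁻¹:ℝ) : ℝ) : ℂ) = 1 := by
    push_cast; ring
  rw [h1]
  ring

lemma K1_ne {n : ℤ} (hn : n ≠ 0) : fourierCoeffOn hab (fun x : ℝ => (x:ℂ)) n ≠ 0 := by
  rw [K1 hn]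
  exact mul_ne_zero (one_div_ne_zero (twopin_ne hn)) (fourier_ne_zero _ _)

lemma K2_ne (n : ℤ) : fourierCoeffOn hab (fun x : ℝ => (x:ℂ)^2) n ≠ 0 := by
  rcases eq_or_ne n 0 with rfl | hn
  · rw [fourierCoeffOn_eq_integral]
    have : ∀ x : ℝ, (fourier (-(0:ℤ)) (x : AddCircle (-(2⁻¹:ℝ) + 1 - -(2⁻¹:ℝ)))) • ((x:ℂ)^2)
        = ((x^2 : ℝ) : ℂ) := by
      intro x
      simp [fourier_zero]
    simp_rw [this]
    rw [intervalIntegral.integral_ofReal]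
    rw [_root_.integral_pow]
    norm_num
  · have hder : ∀ x ∈ uIcc (-(2⁻¹:ℝ)) (-(2⁻¹:ℝ) + 1),
        HasDerivAt (fun y : ℝ => (y:ℂ)^2) ((fun y : ℝ => 2 * (y:ℂ)) x) x := by
      intro x _
      simpa [Complex.ofReal_pow] using ((hasDerivAt_pow 2 x).ofReal_comp)
    have hint : IntervalIntegrable (fun y : ℝ => 2 * (y:ℂ)) MeasureTheory.volume
        (-(2⁻¹:ℝ)) (-(2⁻¹:ℝ) + 1) :=
      (Continuous.intervalIntegrable (by continuity) _ _)
    rw [fourierCoeffOn_of_hasDerivAt hab hn hder hint]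
    have h2 : fourierCoeffOn hab (fun y : ℝ => 2 * (y:ℂ)) n
        = 2 * fourierCoeffOn hab (fun y : ℝ => (y:ℂ)) n :=
      fourierCoeffOn.const_mul _ _ _ _
    have hsq : ((↑(-(2⁻¹:ℝ) + 1) : ℂ)^2 - (↑(-(2⁻¹:ℝ)) : ℂ)^2) = 0 := by
      push_cast; ring_nf
    rw [h2, hsq, mul_zero, zero_sub]
    have h1 : ((-(2⁻¹:ℝ) + 1 : ℝ) : ℂ) - ((-(2⁻¹:ℝ) : ℝ) : ℂ) = 1 := by
      push_cast; ring
    rw [h1, one_mul]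
    apply mul_ne_zero (one_div_ne_zero (twopin_ne hn))
    simpa using mul_ne_zero two_ne_zero (K1_ne hn)

lemma fourierCoeff_Cfun_ne (n : ℤ) : fourierCoeff Cfun n ≠ 0 := by
  rw [Cfun_eq, fourierCoeff_liftIoc_eq]
  exact K2_ne n

lemma Kne (n : ℤ) : (∫ t : 𝕋, fourier n t * Cfun t ∂haarAddCircle) ≠ 0 := by
  have : (∫ t : 𝕋, fourier n t * Cfun t ∂haarAddCircle) = fourierCoeff Cfun (-n) := by
    rw [fourierCoeff]
    simp [smul_eq_mul]
  rw [this]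
  exact fourierCoeff_Cfun_ne _

lemma integrable_cont' {E : Type*} [NormedAddCommGroup E] {f : 𝕋 → E} (hf : Continuous f)
    (μ : Measure 𝕋) [IsFiniteMeasure μ] : Integrable f μ :=
  hf.integrable_of_hasCompactSupport (HasCompactSupport.of_compactSpace f)

lemma key (μ : Measure 𝕋) [IsProbabilityMeasure μ] (n : ℤ) :
    (∫ x : 𝕋, fourier n x * ((∫ y : 𝕋, dist x y ^ 2 ∂μ : ℝ) : ℂ) ∂haarAddCircle)
    = (∫ t : 𝕋, fourier n t * Cfun t ∂haarAddCircle) * ∫ y : 𝕋, fourier n y ∂μ := by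
  have hC : Continuous fun p : 𝕋 × 𝕋 => fourier n p.1 * Cfun (p.1 - p.2) := by
    exact ((map_continuous (fourier n)).comp continuous_fst).mul
      (continuous_Cfun.comp (continuous_fst.sub continuous_snd))
  have hInt : Integrable (Function.uncurry fun x y : 𝕋 => fourier n x * Cfun (x - y))
      (haarAddCircle.prod μ) := by
    exact hC.integrable_of_hasCompactSupport (HasCompactSupport.of_compactSpace _)
  have step1 : ∀ x : 𝕋, fourier n x * ((∫ y : 𝕋, dist x y ^ 2 ∂μ : ℝ) : ℂ)
      = ∫ y : 𝕋, fourier n x * Cfun (x - y) ∂μ := by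
    intro x
    rw [MeasureTheory.integral_const_mul]
    congr 1
    have hcy : ∀ y : 𝕋, Cfun (x - y) = ((dist x y ^ 2 : ℝ) : ℂ) := fun y => by
      simp [Cfun, dist_eq_norm]
    simp_rw [hcy]
    exact (integral_ofReal (𝕜 := ℂ)).symm
  simp_rw [step1]
  rw [MeasureTheory.integral_integral_swap hInt]
  have step2 : ∀ y : 𝕋, (∫ x : 𝕋, fourier n x * Cfun (x - y) ∂haarAddCircle)
      = (∫ t : 𝕋, fourier n t * Cfun t ∂haarAddCircle) * fourier n y := by
    intro y
    have := MeasureTheory.integral_add_right_eq_self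
      (μ := (haarAddCircle : Measure 𝕋)) (fun x => fourier n x * Cfun (x - y)) y
    rw [← this]
    have : ∀ x : 𝕋, fourier n (x + y) * Cfun (x + y - y)
        = (fourier n x * Cfun x) * fourier n y := by
      intro x
      rw [add_sub_cancel_right]
      rw [fourier_apply, fourier_apply, fourier_apply, smul_add, AddCircle.toCircle_add]
      push_cast
      ring
    simp_rw [this]
    rw [MeasureTheory.integral_mul_const]
  simp_rw [step2]
  rw [MeasureTheory.integral_const_mul]

lemma ext_of_fourier (μ ν : Measure 𝕋) [IsProbabilityMeasure μ] [IsProbabilityMeasure ν]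
    (h : ∀ n : ℤ, (∫ y : 𝕋, fourier n y ∂μ) = ∫ y : 𝕋, fourier n y ∂ν) : μ = ν := by
  have hC : ∀ f : C(𝕋, ℂ), (∫ y, f y ∂μ) = ∫ y, f y ∂ν := by
    set L₀ : C(𝕋, ℂ) →ₗ[ℂ] ℂ :=
      { toFun := fun f => (∫ y, f y ∂μ) - ∫ y, f y ∂ν
        map_add' := by
          intro f g
          simp only [ContinuousMap.coe_add, Pi.add_apply]
          rw [integral_add (integrable_cont' f.continuous μ) (integrable_cont' g.continuous μ),
            integral_add (integrable_cont' f.continuous ν) (integrable_cont' g.continuous ν)]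
          ring
        map_smul' := by
          intro c f
          simp only [ContinuousMap.coe_smul, Pi.smul_apply, smul_eq_mul, RingHom.id_apply]
          rw [integral_const_mul, integral_const_mul]
          ring } with hL₀
    have hbound : ∀ f : C(𝕋, ℂ), ‖L₀ f‖ ≤ 2 * ‖f‖ := by
      intro f
      have h1 : ‖∫ y, f y ∂μ‖ ≤ ‖f‖ := by
        have := norm_integral_le_of_norm_le_const (μ := μ)
          (C := ‖f‖) (f := fun y => f y) (.of_forall fun y => f.norm_coe_le_norm y)
        simpa using this
      have h2 : ‖∫ y, f y ∂ν‖ ≤ ‖f‖ := by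
        have := norm_integral_le_of_norm_le_const (μ := ν)
          (C := ‖f‖) (f := fun y => f y) (.of_forall fun y => f.norm_coe_le_norm y)
        simpa using this
      calc ‖(∫ y, f y ∂μ) - ∫ y, f y ∂ν‖ ≤ ‖∫ y, f y ∂μ‖ + ‖∫ y, f y ∂ν‖ := norm_sub_le _ _
        _ ≤ 2 * ‖f‖ := by linarith
    set L : C(𝕋, ℂ) →L[ℂ] ℂ := L₀.mkContinuous 2 hbound with hL
    have hker : Submodule.span ℂ (Set.range (fourier (T := 1))) ≤ L.ker := by
      rw [Submodule.span_le]
      rintro _ ⟨n, rfl⟩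
      have : L (fourier n) = 0 := by
        simp only [hL, hL₀, LinearMap.mkContinuous_apply, LinearMap.coe_mk, AddHom.coe_mk]
        rw [sub_eq_zero]
        exact h n
      simpa [LinearMap.mem_ker] using this
    have htop := Submodule.topologicalClosure_minimal _ hker (ContinuousLinearMap.isClosed_ker L)
    rw [span_fourier_closure_eq_top] at htop
    intro f
    have hf : L f = 0 := htop (Submodule.mem_top (x := f))
    rw [hL, LinearMap.mkContinuous_apply] at hf
    simpa [hL₀, sub_eq_zero] using hf
  apply ext_of_forall_lintegral_eq_of_IsFiniteMeasure
  intro f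
  have hfc : Continuous fun x : 𝕋 => (f x : ℝ) := NNReal.continuous_coe.comp f.continuous
  have hfC : Continuous fun x : 𝕋 => (RCLike.ofReal (K := ℂ) (f x : ℝ)) :=
    RCLike.continuous_ofReal.comp hfc
  have hint_mu : Integrable (fun x : 𝕋 => (f x : ℝ)) μ := integrable_cont' hfc μ
  have hint_nu : Integrable (fun x : 𝕋 => (f x : ℝ)) ν := integrable_cont' hfc ν
  have hcc := hC ⟨fun x => (RCLike.ofReal (K := ℂ) (f x : ℝ)), hfC⟩
  simp only [ContinuousMap.coe_mk] at hcc
  have hreal : (∫ x, (f x : ℝ) ∂μ) = ∫ x, (f x : ℝ) ∂ν := by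
    rw [integral_ofReal (𝕜 := ℂ), integral_ofReal (𝕜 := ℂ)] at hcc
    exact_mod_cast hcc
  rw [lintegral_coe_eq_integral f hint_mu, lintegral_coe_eq_integral f hint_nu, hreal]

end WassAux

end

open MeasureTheory

/-- On the one-dimensional torus `𝕋 = ℝ/ℤ` (with the flat metric
`ϱ(x,y) = |(x-y) mod 1|`), a Borel probability measure is determined by its
quadratic Wasserstein potential: if `∫ ϱ(x,y)² dμ(y) = ∫ ϱ(x,y)² dν(y)` for
every `x`, then `μ = ν`. -/
theorem measure_eq_of_potential_eq (μ ν : Measure (AddCircle (1 : ℝ)))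
    (hμ : IsProbabilityMeasure μ) (hν : IsProbabilityMeasure ν)
    (h : ∀ x : AddCircle (1 : ℝ),
      ∫ y, dist x y ^ 2 ∂μ = ∫ y, dist x y ^ 2 ∂ν) :
    μ = ν := by
  apply WassAux.ext_of_fourier μ ν
  intro n
  have key1 := WassAux.key μ n
  have key2 := WassAux.key ν n
  have heq : (∫ x : WassAux.𝕋,
        fourier n x * ((∫ y : WassAux.𝕋, dist x y ^ 2 ∂μ : ℝ) : ℂ) ∂AddCircle.haarAddCircle)
      = ∫ x : WassAux.𝕋,
        fourier n x * ((∫ y : WassAux.𝕋, dist x y ^ 2 ∂ν : ℝ) : ℂ) ∂AddCircle.haarAddCircle := by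
    simp_rw [h]
  rw [key1, key2] at heq
  exact mul_left_cancel₀ (WassAux.Kne n) heq
end

section
/- Let n ≥ 2, p ≥ 1, x ∈ T^n, j ∈ {1,...,n}, and μ a Borel probability measure on T^n. For p = 1, lim_{s→0+} [T^1_μ(x + s e^j) − 2 T^1_μ(x) + T^1_μ(x − s e^j)]/s = 2 μ({x}) − ∫_{H(x + (1/2)e^j, j)} (1/4 + ϱ_{n−1}(x̌_j, y̌_j)^2)^{−1/2} dμ(y). -/
open MeasureTheory Filter

/-- The `p`-Wasserstein potential of `μ` at `x`: `T^p_μ(x) = ∫ ϱ(x,y)^p dμ(y)`. -/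
noncomputable def torusPotential {n : ℕ} (p : ℝ) (μ : MeasureTheory.Measure (Torus n))
    (x : Torus n) : ℝ :=
  ∫ y, torusDist x y ^ p ∂μ

/-- The point `x + s·e^j` on the torus. -/
noncomputable def torusShift {n : ℕ} (x : Torus n) (j : Fin n) (s : ℝ) : Torus n :=
  fun i => if i = j then x i + ((s : ℝ) : AddCircle (1 : ℝ)) else x i

/-- The "hyperplane" `H(z,j) = {y : y_j = z_j}`. -/
def torusHyperplane {n : ℕ} (z : Torus n) (j : Fin n) : Set (Torus n) :=
  {y | y j = z j}

/-- The flat distance on `𝕋^{n-1}` between `x̌_j` and `y̌_j`, the points obtained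
from `x` and `y` by dropping the `j`-th coordinate. -/
noncomputable def torusDistDrop {n : ℕ} (j : Fin n) (x y : Torus n) : ℝ :=
  Real.sqrt (∑ i ∈ Finset.univ.erase j, dist (x i) (y i) ^ 2)

open Set Real

local instance : Fact ((0:ℝ) < 1) := ⟨one_pos⟩

lemma norm_coe_of_le_half {t : ℝ} (ht : |t| ≤ 1/2) : ‖((t:ℝ) : AddCircle (1:ℝ))‖ = |t| :=
  (AddCircle.norm_coe_eq_abs_iff (p := 1) one_ne_zero).2 (by rwa [abs_one])

lemma norm_coe_neg_side {t : ℝ} (h1 : -1 < t) (h2 : t < -(1/2)) :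
    ‖((t:ℝ) : AddCircle (1:ℝ))‖ = t + 1 := by
  rw [AddCircle.norm_eq, inv_one, one_mul, mul_one]
  have hr : round t = -1 := by
    rw [round_eq, Int.floor_eq_iff]
    constructor <;> push_cast <;> linarith
  rw [hr]
  push_cast
  rw [abs_of_nonneg (by linarith)]
  ring

lemma norm_coe_pos_side {t : ℝ} (h1 : 1/2 < t) (h2 : t < 1) :
    ‖((t:ℝ) : AddCircle (1:ℝ))‖ = 1 - t := by
  rw [AddCircle.norm_eq, inv_one, one_mul, mul_one]
  have hr : round t = 1 := by
    rw [round_eq, Int.floor_eq_iff]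
    constructor <;> push_cast <;> linarith
  rw [hr]
  push_cast
  rw [abs_of_nonpos (by linarith)]
  ring

lemma exists_rep (u : AddCircle (1:ℝ)) :
    ∃ a : ℝ, a ∈ Set.Ico (-(1/2) : ℝ) (1/2) ∧ ((a : ℝ) : AddCircle (1:ℝ)) = u := by
  let b := AddCircle.equivIco (1:ℝ) (-(1/2)) u
  refine ⟨b.1, ⟨b.2.1, by have := b.2.2; linarith⟩, ?_⟩
  exact (AddCircle.equivIco (1:ℝ) (-(1/2))).symm_apply_apply u

lemma coe_half_eq (heq : True) : (((1:ℝ)/2 : ℝ) : AddCircle (1:ℝ)) = ((-(1/2) : ℝ) : AddCircle (1:ℝ)) := by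
  rw [show (-(1/2):ℝ) = 1/2 - 1 by norm_num]
  rw [show ((1/2 - 1 : ℝ) : AddCircle (1:ℝ)) = ((1/2 - 1 + 1 : ℝ) : AddCircle (1:ℝ)) from (AddCircle.coe_add_period 1 (1/2 - 1)).symm]
  norm_num

lemma rpow_neg_half_eq (z : ℝ) (hz : 0 ≤ z) : z ^ (-(1/2):ℝ) = (Real.sqrt z)⁻¹ := by
  rw [Real.rpow_neg hz, Real.sqrt_eq_rpow]

lemma slope_sqrt (a R : ℝ) (h0 : a^2 + R ≠ 0) :
    Tendsto (fun s : ℝ => (Real.sqrt ((s - a)^2 + R) - Real.sqrt (a^2 + R)) / s)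
      (nhdsWithin 0 {(0:ℝ)}ᶜ) (nhds (-a / Real.sqrt (a^2 + R))) := by
  have hf : HasDerivAt (fun t : ℝ => (t - a)^2 + R) (-(2*a)) 0 := by
    have h := (((hasDerivAt_id (0:ℝ)).sub_const a).pow 2).add_const R
    refine h.congr_deriv ?_
    simp
  have hne : (fun t : ℝ => (t - a)^2 + R) 0 ≠ 0 := by
    simpa [zero_sub, neg_sq] using h0
  have h2 := hf.sqrt hne
  have h3 : HasDerivAt (fun t : ℝ => Real.sqrt ((t - a)^2 + R)) (-a / Real.sqrt (a^2+R)) 0 := by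
    convert h2 using 1
    simp only [zero_sub, neg_sq]
    rw [show -(2*a) = 2 * (-a) by ring, mul_div_mul_left _ _ (two_ne_zero)]
  have h4 := hasDerivAt_iff_tendsto_slope.mp h3
  have : ∀ s : ℝ, slope (fun t : ℝ => Real.sqrt ((t - a)^2 + R)) 0 s
      = (Real.sqrt ((s - a)^2 + R) - Real.sqrt (a^2 + R)) / s := by
    intro s
    rw [slope_def_field]
    simp [zero_sub, neg_sq]
  exact Tendsto.congr this h4

lemma tendsto_neg_Ioi : Tendsto (fun s : ℝ => -s) (nhdsWithin 0 (Set.Ioi 0)) (nhdsWithin 0 {(0:ℝ)}ᶜ) := by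
  apply tendsto_nhdsWithin_of_tendsto_nhds_of_eventually_within
  · simpa using (continuous_neg.tendsto (0:ℝ)).mono_left nhdsWithin_le_nhds
  · filter_upwards [self_mem_nhdsWithin] with s hs
    exact (neg_ne_zero.mpr (ne_of_gt hs))

section TorusLemmas
variable {n : ℕ}

lemma torusShift_zero (x : Torus n) (j : Fin n) : torusShift x j 0 = x := by
  funext i
  simp [torusShift]

lemma torusDist_shift (x : Torus n) (j : Fin n) (y : Torus n) (t : ℝ) (a : ℝ)
    (haa : ((a : ℝ) : AddCircle (1:ℝ)) = y j - x j) :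
    torusDist (torusShift x j t) y =
      Real.sqrt (‖(((t - a : ℝ)) : AddCircle (1:ℝ))‖^2 +
        ∑ i ∈ Finset.univ.erase j, dist (x i) (y i)^2) := by
  unfold torusDist
  congr 1
  rw [← Finset.add_sum_erase _ _ (Finset.mem_univ j)]
  congr 1
  · simp only [torusShift, if_pos rfl]
    rw [dist_eq_norm]
    congr 1
    have h1 : ((t - a : ℝ) : AddCircle (1:ℝ)) = ((t:ℝ) : AddCircle (1:ℝ)) - ((a:ℝ) : AddCircle (1:ℝ)) := by
      norm_cast
    rw [h1, haa]
    abel_nf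
    rw [add_assoc]
  · refine Finset.sum_congr rfl fun i hi => ?_
    rw [torusShift]
    rw [if_neg (Finset.ne_of_mem_erase hi)]

lemma torusDist_shift_self (x : Torus n) (j : Fin n) (t : ℝ) :
    torusDist (torusShift x j t) x = ‖((t:ℝ) : AddCircle (1:ℝ))‖ := by
  have := torusDist_shift x j x t 0 (by simp)
  simp only [sub_zero] at this
  rw [this]
  have : ∑ i ∈ Finset.univ.erase j, dist (x i) (x i)^2 = 0 := by simp
  rw [this, add_zero, Real.sqrt_sq (norm_nonneg _)]

lemma torusDist_eq (u v : Torus n) :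
    torusDist u v = dist ((WithLp.equiv 2 (∀ _ : Fin n, AddCircle (1:ℝ))).symm u)
      ((WithLp.equiv 2 (∀ _ : Fin n, AddCircle (1:ℝ))).symm v) := by
  rw [PiLp.dist_eq_sum (by norm_num : 0 < ((2:ENNReal)).toReal)]
  have h2 : ((2:ENNReal)).toReal = ((2:ℕ):ℝ) := by norm_num
  rw [torusDist, Real.sqrt_eq_rpow, h2]
  congr 1
  · refine Finset.sum_congr rfl fun i _ => ?_
    rw [Real.rpow_natCast]
    rfl

lemma torusDist_abs_sub (z x y : Torus n) :
    |torusDist z y - torusDist x y| ≤ torusDist z x := by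
  rw [torusDist_eq z y, torusDist_eq x y, torusDist_eq z x]
  exact abs_dist_sub_le _ _ _

end TorusLemmas

lemma tendsto_pointwise {n : ℕ} (x : Torus n) (j : Fin n) (y : Torus n) :
    Tendsto (fun s : ℝ =>
        (torusDist (torusShift x j s) y - 2 * torusDist x y
          + torusDist (torusShift x j (-s)) y) / s)
      (nhdsWithin 0 (Set.Ioi 0))
      (nhds (Set.indicator {x} (fun _ => (2:ℝ)) y -
        Set.indicator (torusHyperplane (torusShift x j (1/2)) j)
          (fun y => (1/4 + torusDistDrop j x y ^ 2) ^ (-(1/2) : ℝ)) y)) := by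
  obtain ⟨a, ha, haa⟩ := exists_rep (y j - x j)
  set R := ∑ i ∈ Finset.univ.erase j, dist (x i) (y i)^2 with hRdef
  have hR : 0 ≤ R := Finset.sum_nonneg fun i _ => sq_nonneg _
  have habs : |a| ≤ 1/2 := abs_le.mpr ⟨ha.1, ha.2.le⟩
  have hshift : ∀ t : ℝ, torusDist (torusShift x j t) y
      = Real.sqrt (‖(((t - a : ℝ)) : AddCircle (1:ℝ))‖^2 + R) :=
    fun t => torusDist_shift x j y t a haa
  have hmid : torusDist x y = Real.sqrt (a^2 + R) := by
    have h := hshift 0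
    rw [torusShift_zero] at h
    rw [h, zero_sub, norm_coe_of_le_half (by rwa [abs_neg]), abs_neg, sq_abs]
  have hdrop : torusDistDrop j x y ^ 2 = R := Real.sq_sqrt hR
  have e1 : a ∈ Set.Ico (-(1/2):ℝ) (-(1/2)+1) := ⟨ha.1, by linarith [ha.2]⟩
  have hHy : (y ∈ torusHyperplane (torusShift x j (1/2)) j) ↔ a = -(1/2) := by
    simp only [torusHyperplane, Set.mem_setOf_eq, torusShift, if_true, eq_self_iff_true]
    rw [← sub_eq_iff_eq_add', ← haa, coe_half_eq trivial]
    exact AddCircle.coe_eq_coe_iff_of_mem_Ico e1 (by constructor <;> norm_num)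
  have hxy : y = x ↔ (a = 0 ∧ R = 0) := by
    constructor
    · intro hyx
      have h0 : ((a:ℝ) : AddCircle (1:ℝ)) = (((0:ℝ)) : AddCircle (1:ℝ)) := by
        rw [haa, hyx]; simp
      refine ⟨(AddCircle.coe_eq_coe_iff_of_mem_Ico e1 (by constructor <;> norm_num)).mp h0, ?_⟩
      rw [hRdef, hyx]
      simp
    · rintro ⟨h1, h2⟩
      rw [h1] at haa
      have hj : y j = x j := by
        have h3 : y j - x j = 0 := by rw [← haa]; simp
        exact sub_eq_zero.mp h3
      funext i
      rcases eq_or_ne i j with rfl | hij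
      · exact hj
      · have hsum := hRdef.symm.trans h2
        have := (Finset.sum_eq_zero_iff_of_nonneg (fun i _ => sq_nonneg _)).mp hsum i
          (Finset.mem_erase.mpr ⟨hij, Finset.mem_univ i⟩)
        have hd : dist (x i) (y i) = 0 := by
          have := pow_eq_zero_iff (n := 2) (by norm_num) |>.mp this
          exact this
        rw [dist_eq_zero] at hd
        exact hd.symm
  by_cases hx : y = x
  · obtain ⟨ha0, hR0⟩ := hxy.mp hx
    have hmemx : y ∈ ({x} : Set (Torus n)) := by simp [hx]
    have hnotH : y ∉ torusHyperplane (torusShift x j (1/2)) j := by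
      intro h
      have h5 := hHy.mp h
      rw [ha0] at h5
      norm_num at h5
    rw [Set.indicator_of_mem hmemx, Set.indicator_of_notMem hnotH, sub_zero]
    refine Tendsto.congr' ?_ tendsto_const_nhds
    filter_upwards [Ioo_mem_nhdsGT_of_mem (by norm_num : (0:ℝ) ∈ Set.Ico 0 (1/2))] with s hs
    have hs0 : (0:ℝ) < s := hs.1
    have hs2 : s < 1/2 := hs.2
    have d1 : torusDist (torusShift x j s) y = s := by
      rw [hshift s, ha0, sub_zero, hR0, add_zero,
        norm_coe_of_le_half (by rw [abs_of_pos hs0]; linarith), sq_abs, Real.sqrt_sq hs0.le]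
    have d2 : torusDist (torusShift x j (-s)) y = s := by
      rw [hshift (-s), ha0, sub_zero, hR0, add_zero,
        norm_coe_of_le_half (by rw [abs_neg, abs_of_pos hs0]; linarith), abs_neg, sq_abs,
        Real.sqrt_sq hs0.le]
    have dm : torusDist x y = 0 := by rw [hmid, ha0, hR0]; simp
    rw [d1, d2, dm]
    field_simp
    ring
  by_cases hH : a = -(1/2)
  · have hne : ((1:ℝ)/2)^2 + R ≠ 0 := by positivity
    rw [Set.indicator_of_notMem (by simpa [Set.mem_singleton_iff] using hx),
      Set.indicator_of_mem (hHy.mpr hH), hdrop, zero_sub]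
    have hval : -((1:ℝ)/4 + R) ^ (-(1/2):ℝ) = 2 * (-(1/2) / Real.sqrt (((1:ℝ)/2)^2 + R)) := by
      rw [rpow_neg_half_eq _ (by positivity), show ((1:ℝ)/2)^2 = 1/4 by norm_num]
      have hsq : Real.sqrt (1/4 + R) ≠ 0 := by positivity
      field_simp
    rw [hval]
    have hmain := ((slope_sqrt (1/2) R hne).mono_left
        (nhdsWithin_mono 0 (fun s hs => ne_of_gt hs))).const_mul 2
    refine Tendsto.congr' ?_ hmain
    filter_upwards [Ioo_mem_nhdsGT_of_mem (by norm_num : (0:ℝ) ∈ Set.Ico 0 (1/2))] with s hs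
    have hs0 : (0:ℝ) < s := hs.1
    have hs2 : s < 1/2 := hs.2
    have d1 : torusDist (torusShift x j s) y = Real.sqrt ((s - 1/2)^2 + R) := by
      rw [hshift s, hH]
      congr 2
      rw [show (s - -(1/2) : ℝ) = s + 1/2 by ring, norm_coe_pos_side (by linarith) (by linarith)]
      ring
    have d2 : torusDist (torusShift x j (-s)) y = Real.sqrt ((s - 1/2)^2 + R) := by
      rw [hshift (-s), hH]
      congr 2
      rw [norm_coe_of_le_half (abs_le.mpr ⟨by linarith, by linarith⟩), sq_abs]
      ring
    have dm : torusDist x y = Real.sqrt ((1/2:ℝ)^2 + R) := by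
      rw [hmid, hH]
      norm_num
    rw [d1, d2, dm]
    ring
  · have h0 : a^2 + R ≠ 0 := by
      intro h
      have ha2 : a = 0 := by nlinarith [sq_nonneg a, sq_abs a]
      have hR2 : R = 0 := by nlinarith [sq_nonneg a]
      exact hx (hxy.mpr ⟨ha2, hR2⟩)
    have habs' : |a| < 1/2 := abs_lt.mpr ⟨lt_of_le_of_ne ha.1 (Ne.symm hH), ha.2⟩
    rw [Set.indicator_of_notMem (by simpa [Set.mem_singleton_iff] using hx),
      Set.indicator_of_notMem (fun h => hH (hHy.mp h)), sub_zero]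
    have T1 := (slope_sqrt a R h0).mono_left (nhdsWithin_mono 0 (fun s hs => ne_of_gt hs))
    have T2 := ((slope_sqrt a R h0).comp tendsto_neg_Ioi).neg
    have T3 := T1.add T2
    rw [show (-a / Real.sqrt (a^2+R)) + -(-a / Real.sqrt (a^2+R)) = 0 by ring] at T3
    refine Tendsto.congr' ?_ T3
    filter_upwards [Ioo_mem_nhdsGT_of_mem
      (⟨le_refl 0, by linarith⟩ : (0:ℝ) ∈ Set.Ico 0 (1/2 - |a|))] with s hs
    have hs0 : (0:ℝ) < s := hs.1
    have hs2 : s < 1/2 - |a| := hs.2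
    have hb1 : |s - a| ≤ 1/2 := abs_le.mpr
      ⟨by linarith [le_abs_self a, neg_abs_le a], by linarith [le_abs_self a, neg_abs_le a]⟩
    have hb2 : |-s - a| ≤ 1/2 := abs_le.mpr
      ⟨by linarith [le_abs_self a, neg_abs_le a], by linarith [le_abs_self a, neg_abs_le a]⟩
    have d1 : torusDist (torusShift x j s) y = Real.sqrt ((s - a)^2 + R) := by
      rw [hshift s, norm_coe_of_le_half hb1, sq_abs]
    have d2 : torusDist (torusShift x j (-s)) y = Real.sqrt ((-s - a)^2 + R) := by
      rw [hshift (-s), norm_coe_of_le_half hb2, sq_abs]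
    simp only [Function.comp_apply]
    rw [d1, d2, hmid]
    ring

/-- Second-difference formula for the Wasserstein potential on the torus, case `p = 1`. -/
theorem torus_potential_second_difference_one {n : ℕ} (hn : 2 ≤ n)
    (x : Torus n) (j : Fin n) (μ : Measure (Torus n)) (hμ : IsProbabilityMeasure μ) :
    Tendsto (fun s : ℝ =>
        (torusPotential 1 μ (torusShift x j s) - 2 * torusPotential 1 μ x +
          torusPotential 1 μ (torusShift x j (-s))) / s)
      (nhdsWithin 0 (Set.Ioi 0))
      (nhds (2 * (μ {x}).toReal -
        ∫ y in torusHyperplane (torusShift x j (1 / 2)) j,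
          (1 / 4 + torusDistDrop j x y ^ 2) ^ (-(1 / 2) : ℝ) ∂μ)) := by
  have hcont : ∀ z : Torus n, Continuous (fun y : Torus n => torusDist z y) := fun z =>
    (continuous_finset_sum _ fun k _ =>
      ((continuous_const.dist (continuous_apply k)).pow 2)).sqrt
  have hHmeas : MeasurableSet (torusHyperplane (torusShift x j (1 / 2)) j) :=
    (measurable_pi_apply j) (measurableSet_singleton _)
  have hbound : ∀ z w : Torus n, torusDist z w ≤ Real.sqrt n := by
    intro z w
    unfold torusDist
    have h1 : ∑ k, dist (z k) (w k) ^ 2 ≤ ∑ _k : Fin n, (1:ℝ) := by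
      refine Finset.sum_le_sum fun k _ => ?_
      have hd : dist (z k) (w k) ≤ 1 := by
        rw [dist_eq_norm]
        have := AddCircle.norm_le_half_period (1:ℝ) (x := z k - w k) one_ne_zero
        rw [abs_one] at this
        linarith
      nlinarith [dist_nonneg (x := z k) (y := w k)]
    calc Real.sqrt (∑ k, dist (z k) (w k) ^ 2) ≤ Real.sqrt (∑ _k : Fin n, (1:ℝ)) :=
          Real.sqrt_le_sqrt h1
      _ = Real.sqrt n := by rw [Finset.sum_const, Finset.card_univ, Fintype.card_fin,
          nsmul_eq_mul, mul_one]
  have hint : ∀ z : Torus n, Integrable (fun y => torusDist z y) μ := fun z =>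
    (integrable_const (Real.sqrt n)).mono' ((hcont z).aestronglyMeasurable)
      (ae_of_all _ fun y => by
        rw [Real.norm_eq_abs, abs_of_nonneg (by unfold torusDist; exact Real.sqrt_nonneg _)]
        exact hbound z y)
  have hpot : ∀ z : Torus n, torusPotential 1 μ z = ∫ y, torusDist z y ∂μ := fun z => by
    simp only [torusPotential, Real.rpow_one]
  have heq : (fun s : ℝ => (torusPotential 1 μ (torusShift x j s) - 2 * torusPotential 1 μ x +
      torusPotential 1 μ (torusShift x j (-s))) / s)
      = fun s : ℝ => ∫ y, (torusDist (torusShift x j s) y - 2 * torusDist x y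
          + torusDist (torusShift x j (-s)) y) / s ∂μ := by
    funext s
    have i1 : Integrable (fun y => torusDist (torusShift x j s) y - 2 * torusDist x y) μ :=
      (hint _).sub ((hint x).const_mul 2)
    have i2 : Integrable (fun y => torusDist x y) μ := hint x
    rw [integral_div, hpot, hpot, hpot, integral_add i1 (hint _),
      integral_sub (hint _) (i2.const_mul 2), MeasureTheory.integral_const_mul]
  rw [heq]
  have hL : Tendsto (fun s : ℝ => ∫ y, (torusDist (torusShift x j s) y - 2 * torusDist x y
      + torusDist (torusShift x j (-s)) y) / s ∂μ)
      (nhdsWithin 0 (Set.Ioi 0))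
      (nhds (∫ y, (Set.indicator {x} (fun _ => (2:ℝ)) y -
        Set.indicator (torusHyperplane (torusShift x j (1/2)) j)
          (fun y => (1/4 + torusDistDrop j x y ^ 2) ^ (-(1/2) : ℝ)) y) ∂μ)) := by
    refine tendsto_integral_filter_of_dominated_convergence (fun _ => (2:ℝ)) ?_ ?_
      (integrable_const 2) (ae_of_all _ fun y => tendsto_pointwise x j y)
    · refine Eventually.of_forall fun s => Continuous.aestronglyMeasurable ?_
      exact (((hcont _).sub (continuous_const.mul (hcont x))).add (hcont _)).div_const s
    · filter_upwards [Ioo_mem_nhdsGT_of_mem (by norm_num : (0:ℝ) ∈ Set.Ico 0 (1/2))] with s hs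
      refine ae_of_all _ fun y => ?_
      have hs0 : (0:ℝ) < s := hs.1
      have hs2 : s < 1/2 := hs.2
      have hd1 : torusDist (torusShift x j s) x = s := by
        rw [torusDist_shift_self, norm_coe_of_le_half (by rw [abs_of_pos hs0]; linarith),
          abs_of_pos hs0]
      have hd2 : torusDist (torusShift x j (-s)) x = s := by
        rw [torusDist_shift_self, norm_coe_of_le_half (by rw [abs_neg, abs_of_pos hs0]; linarith),
          abs_neg, abs_of_pos hs0]
      have h1 : |torusDist (torusShift x j s) y - torusDist x y| ≤ s := by
        have := torusDist_abs_sub (torusShift x j s) x y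
        rwa [hd1] at this
      have h2 : |torusDist (torusShift x j (-s)) y - torusDist x y| ≤ s := by
        have := torusDist_abs_sub (torusShift x j (-s)) x y
        rwa [hd2] at this
      rw [Real.norm_eq_abs, abs_div, abs_of_pos hs0, div_le_iff₀ hs0]
      calc |torusDist (torusShift x j s) y - 2 * torusDist x y
            + torusDist (torusShift x j (-s)) y|
          ≤ |torusDist (torusShift x j s) y - torusDist x y|
            + |torusDist (torusShift x j (-s)) y - torusDist x y| := by
            rw [show torusDist (torusShift x j s) y - 2 * torusDist x y
              + torusDist (torusShift x j (-s)) y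
              = (torusDist (torusShift x j s) y - torusDist x y)
                + (torusDist (torusShift x j (-s)) y - torusDist x y) by ring]
            exact abs_add_le _ _
        _ ≤ s + s := add_le_add h1 h2
        _ = 2 * s := by ring
  have hφcont : Continuous (fun y : Torus n =>
      (1/4 + torusDistDrop j x y ^ 2) ^ (-(1/2) : ℝ)) := by
    have hdc : Continuous (fun y : Torus n => torusDistDrop j x y) := by
      unfold torusDistDrop; exact (continuous_finset_sum _ fun k _ =>
        ((continuous_const.dist (continuous_apply k)).pow 2)).sqrt
    refine Continuous.rpow_const (continuous_const.add (hdc.pow 2)) fun y => Or.inl ?_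
    have : 0 ≤ torusDistDrop j x y ^ 2 := sq_nonneg _
    positivity
  have hφint : Integrable (fun y : Torus n =>
      (1/4 + torusDistDrop j x y ^ 2) ^ (-(1/2) : ℝ)) μ := by
    refine (integrable_const (2:ℝ)).mono' hφcont.aestronglyMeasurable (ae_of_all _ fun y => ?_)
    have hpos : (0:ℝ) < 1/4 + torusDistDrop j x y ^ 2 := by positivity
    rw [Real.norm_eq_abs, abs_of_nonneg (Real.rpow_nonneg hpos.le _), rpow_neg_half_eq _ hpos.le]
    have hs4 : (1/2:ℝ) ≤ Real.sqrt (1/4 + torusDistDrop j x y ^ 2) := by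
      rw [show (1/2:ℝ) = Real.sqrt (1/4) by
        rw [show (1/4:ℝ) = (1/2)^2 by norm_num, Real.sqrt_sq (by norm_num)]]
      exact Real.sqrt_le_sqrt (by nlinarith [sq_nonneg (torusDistDrop j x y)])
    calc (Real.sqrt (1/4 + torusDistDrop j x y ^ 2))⁻¹ ≤ (1/2:ℝ)⁻¹ := by
          apply inv_anti₀ (by norm_num) hs4
      _ = 2 := by norm_num
  have hLval : (∫ y, (Set.indicator {x} (fun _ => (2:ℝ)) y -
      Set.indicator (torusHyperplane (torusShift x j (1/2)) j)
        (fun y => (1/4 + torusDistDrop j x y ^ 2) ^ (-(1/2) : ℝ)) y) ∂μ)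
      = 2 * (μ {x}).toReal -
        ∫ y in torusHyperplane (torusShift x j (1 / 2)) j,
          (1 / 4 + torusDistDrop j x y ^ 2) ^ (-(1 / 2) : ℝ) ∂μ := by
    rw [integral_sub ((integrable_const (2:ℝ)).indicator (measurableSet_singleton x))
      (hφint.indicator hHmeas), integral_indicator hHmeas,
      integral_indicator_const _ (measurableSet_singleton x), smul_eq_mul, mul_comm]
    rfl
  rw [← hLval]
  exact hL
end
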